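/- When the sparsity pattern is full, i.e. S = 1ₙ1ₙᵀ, the reduced matrix satisfies ρ A (P + σI)⁻¹ Aᵀ + Iₙ = α Iₙ + β 1ₙ1ₙᵀ with α = σρ/((2 + σ/2)(2 + σ)) + nρ/(2 + σ) + 1 and β = ρ/(2 + σ), where P = diag(p ⊙ p) with p having entries 2 at diagonal positions and √2 at strictly upper-triangular positions. -/

import Mathlib

open Matrix

/-- The matrix `1ₙᵀ ⊗ Iₙ` acting on vectorized matrices. -/
def rowSumMat (n : ℕ) : Matrix (Fin n) (Fin n × Fin n) ℝ :=
  Matrix.of fun i p => if i = p.2 then 1 else 0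

/-- The matrix `Iₙ ⊗ 1ₙᵀ` acting on vectorized matrices. -/
def colSumMat (n : ℕ) : Matrix (Fin n) (Fin n × Fin n) ℝ :=
  Matrix.of fun i p => if i = p.1 then 1 else 0

lemma triangle_sum_eq {n : ℕ} (F : Fin n × Fin n → ℝ) (hsym : ∀ a b, F (a,b) = F (b,a)) :
    ∑ q ∈ Finset.univ.filter (fun q : Fin n × Fin n => q.2 ≤ q.1), F q
      = (∑ q, F q + ∑ a, F (a,a)) / 2 := by
  have h1 : ∑ q ∈ Finset.univ.filter (fun q : Fin n × Fin n => q.2 ≤ q.1), F q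
      = ∑ q : Fin n × Fin n, if q.2 ≤ q.1 then F q else 0 := by
    rw [Finset.sum_filter]
  have h2 : (∑ q : Fin n × Fin n, if q.2 ≤ q.1 then F q else 0)
      = ∑ q : Fin n × Fin n, if q.1 ≤ q.2 then F q else 0 := by
    rw [← Equiv.sum_comp (Equiv.prodComm (Fin n) (Fin n))]
    refine Finset.sum_congr rfl fun q _ => ?_
    simp [Equiv.prodComm, Prod.swap, hsym q.1 q.2]
    exact if_congr Iff.rfl rfl rfl
  have h3 : (∑ q : Fin n × Fin n, if q.2 ≤ q.1 then F q else 0)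
      + (∑ q : Fin n × Fin n, if q.1 ≤ q.2 then F q else 0)
      = ∑ q, F q + ∑ a, F (a,a) := by
    rw [← Finset.sum_add_distrib]
    have : ∑ a : Fin n, F (a,a) = ∑ q : Fin n × Fin n, if q.1 = q.2 then F q else 0 := by
      rw [Fintype.sum_prod_type]
      simp
    rw [this, ← Finset.sum_add_distrib]
    refine Finset.sum_congr rfl fun q _ => ?_
    rcases le_or_gt q.1 q.2 with h | h
    · rcases eq_or_lt_of_le h with h' | h'
      · simp [h, h'.symm.le, h']
      · simp [h, h'.ne, not_le.mpr h']
    · simp [h.le, h.ne', not_le.mpr h]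
  linarith [h1, h2, h3]

lemma delta_sum_all {n : ℕ} (i j : Fin n) :
    ∑ q : Fin n × Fin n, ((if i = q.2 then (1:ℝ) else 0) + (if i = q.1 then 1 else 0))
      * ((if j = q.2 then (1:ℝ) else 0) + (if j = q.1 then 1 else 0))
      = 2 + 2 * n * (if i = j then 1 else 0) := by
  rw [Fintype.sum_prod_type]
  simp [add_mul, mul_add, Finset.sum_add_distrib, ite_mul, mul_ite, Finset.mul_sum,
    Finset.sum_ite_eq, Finset.sum_ite_eq', mul_comm]
  rcases eq_or_ne i j with h | h <;> simp [h] <;> ring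

lemma delta_sum_diag {n : ℕ} (i j : Fin n) :
    ∑ a : Fin n, ((if i = a then (1:ℝ) else 0) + (if i = a then 1 else 0))
      * ((if j = a then (1:ℝ) else 0) + (if j = a then 1 else 0))
      = 4 * (if i = j then 1 else 0) := by
  simp [add_mul, mul_add, Finset.sum_add_distrib, ite_mul, mul_ite,
    Finset.sum_ite_eq, Finset.sum_ite_eq']
  rcases eq_or_ne i j with h | h <;> simp [h] <;> ring

/-- For the fully dense pattern `S = 11ᵀ`, the reduced matrix is
`ρ A (P + σI)⁻¹ Aᵀ + I = α I + β 11ᵀ` with `α = σρ/((2+σ/2)(2+σ)) + nρ/(2+σ) + 1` and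
`β = ρ/(2+σ)`. -/
theorem reduced_matrix_dense_case {n m : ℕ} (hn : 1 ≤ n)
    (ι : Fin m → Fin n × Fin n) (hι : Function.Injective ι)
    (hrange : ∀ p : Fin n × Fin n, p.2 ≤ p.1 ↔ ∃ k, ι k = p)
    (Hu : Matrix (Fin m) (Fin n × Fin n) ℝ)
    (hHu : ∀ k p, Hu k p = if ι k = p then 1 else 0)
    (A : Matrix (Fin n) (Fin m) ℝ) (hA : A = (rowSumMat n + colSumMat n) * Huᵀ)
    (p : Fin m → ℝ) (hp : ∀ k, p k = if (ι k).1 = (ι k).2 then 2 else Real.sqrt 2)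
    (P : Matrix (Fin m) (Fin m) ℝ) (hP : P = Matrix.diagonal (fun k => p k * p k))
    (ρ σ : ℝ) (hρ : 0 < ρ) (hσ : 0 < σ) :
    ρ • (A * (P + σ • (1 : Matrix (Fin m) (Fin m) ℝ))⁻¹ * Aᵀ) +
        (1 : Matrix (Fin n) (Fin n) ℝ) =
      (σ * ρ / ((2 + σ / 2) * (2 + σ)) + n * ρ / (2 + σ) + 1) •
          (1 : Matrix (Fin n) (Fin n) ℝ) +
        (ρ / (2 + σ)) • (Matrix.of fun _ _ => (1 : ℝ)) := by
  have hpk : ∀ k, p k * p k = if (ι k).1 = (ι k).2 then (4:ℝ) else 2 := by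
    intro k
    rw [hp k]
    split_ifs <;> norm_num [Real.mul_self_sqrt]
  have hne : ∀ k, p k * p k + σ ≠ 0 := by
    intro k
    rw [hpk k]
    split_ifs <;> nlinarith
  have hdiag : P + σ • (1 : Matrix (Fin m) (Fin m) ℝ)
      = Matrix.diagonal (fun k => p k * p k + σ) := by
    rw [hP, Matrix.smul_one_eq_diagonal, Matrix.diagonal_add]
  have hinv : (P + σ • (1 : Matrix (Fin m) (Fin m) ℝ))⁻¹
      = Matrix.diagonal (fun k => (p k * p k + σ)⁻¹) := by
    rw [hdiag]
    apply Matrix.inv_eq_right_inv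
    rw [Matrix.diagonal_mul_diagonal]
    convert Matrix.diagonal_one
    exact mul_inv_cancel₀ (hne _)
  have hAe : ∀ i k, A i k
      = (if i = (ι k).2 then (1:ℝ) else 0) + (if i = (ι k).1 then 1 else 0) := by
    intro i k
    rw [hA, Matrix.mul_apply]
    simp only [Matrix.add_apply, rowSumMat, colSumMat, Matrix.of_apply,
      Matrix.transpose_apply, hHu, mul_ite, mul_one, mul_zero]
    rw [Finset.sum_ite_eq]
    simp
  ext i j
  set x : ℝ := ((4:ℝ) + σ)⁻¹ with hx
  set y : ℝ := ((2:ℝ) + σ)⁻¹ with hy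
  set F : Fin n × Fin n → ℝ := fun q =>
    ((if i = q.2 then (1:ℝ) else 0) + (if i = q.1 then 1 else 0))
    * (if q.1 = q.2 then x else y)
    * ((if j = q.2 then (1:ℝ) else 0) + (if j = q.1 then 1 else 0)) with hF
  have hentry : (A * (P + σ • (1 : Matrix (Fin m) (Fin m) ℝ))⁻¹ * Aᵀ) i j
      = ∑ k, F (ι k) := by
    rw [hinv, Matrix.mul_apply]
    refine Finset.sum_congr rfl fun k _ => ?_
    rw [Matrix.mul_diagonal, Matrix.transpose_apply, hAe, hAe, hF]
    have : (p k * p k + σ)⁻¹ = if (ι k).1 = (ι k).2 then x else y := by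
      rw [hpk k]; split_ifs <;> rfl
    rw [this]
  have hsum : ∑ k, F (ι k)
      = ∑ q ∈ Finset.univ.filter (fun q : Fin n × Fin n => q.2 ≤ q.1), F q := by
    refine Finset.sum_bij (fun k _ => ι k) ?_ ?_ ?_ ?_
    · intro k _
      simp only [Finset.mem_filter, Finset.mem_univ, true_and]
      exact (hrange (ι k)).mpr ⟨k, rfl⟩
    · intro a _ b _ h; exact hι h
    · intro q hq
      obtain ⟨k, hk⟩ := (hrange q).mp (Finset.mem_filter.mp hq).2
      exact ⟨k, Finset.mem_univ k, hk⟩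
    · intro k _; rfl
  have hsym : ∀ a b, F (a,b) = F (b,a) := by
    intro a b
    simp only [hF]
    rcases eq_or_ne a b with h | h
    · simp [h]
    · simp [h, h.symm, eq_comm]
      ring
  have hFall : ∑ q, F q = y * (2 + 2 * n * (if i = j then 1 else 0))
      + (x - y) * (4 * (if i = j then 1 else 0)) := by
    have hdecomp : ∀ q : Fin n × Fin n, F q
        = y * (((if i = q.2 then (1:ℝ) else 0) + (if i = q.1 then 1 else 0))
            * ((if j = q.2 then (1:ℝ) else 0) + (if j = q.1 then 1 else 0)))
        + (if q.1 = q.2 then (x - y)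
            * (((if i = q.2 then (1:ℝ) else 0) + (if i = q.1 then 1 else 0))
            * ((if j = q.2 then (1:ℝ) else 0) + (if j = q.1 then 1 else 0))) else 0) := by
      intro q
      simp only [hF]
      split_ifs <;> ring
    rw [Finset.sum_congr rfl fun q _ => hdecomp q, Finset.sum_add_distrib,
      ← Finset.mul_sum, delta_sum_all]
    congr 1
    rw [Fintype.sum_prod_type]
    have : ∀ a : Fin n, (∑ b : Fin n, if a = b then (x - y)
        * (((if i = b then (1:ℝ) else 0) + (if i = a then 1 else 0))
        * ((if j = b then (1:ℝ) else 0) + (if j = a then 1 else 0))) else 0)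
        = (x - y) * (((if i = a then (1:ℝ) else 0) + (if i = a then 1 else 0))
        * ((if j = a then (1:ℝ) else 0) + (if j = a then 1 else 0))) := by
      intro a
      rw [Finset.sum_ite_eq]
      simp
    rw [Finset.sum_congr rfl fun a _ => this a, ← Finset.mul_sum, delta_sum_diag]
  have hFdiag : ∑ a, F (a,a) = x * (4 * (if i = j then 1 else 0)) := by
    have : ∀ a : Fin n, F (a,a) = x * (((if i = a then (1:ℝ) else 0) + (if i = a then 1 else 0))
        * ((if j = a then (1:ℝ) else 0) + (if j = a then 1 else 0))) := by
      intro a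
      simp [hF]
      ring
    rw [Finset.sum_congr rfl fun a _ => this a, ← Finset.mul_sum, delta_sum_diag]
  have h2σ : (2:ℝ) + σ ≠ 0 := by nlinarith
  have h4σ : (4:ℝ) + σ ≠ 0 := by nlinarith
  have h2σ2 : (2:ℝ) + σ/2 ≠ 0 := by nlinarith
  simp only [Matrix.add_apply, Matrix.smul_apply, Matrix.one_apply, Matrix.of_apply,
    hentry, hsum, triangle_sum_eq F hsym, hFall, hFdiag, smul_eq_mul]
  have h8 : (8:ℝ) + σ*6 + σ^2 ≠ 0 := by nlinarith
  rw [hx, hy]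
  rcases eq_or_ne i j with h | h
  · simp only [if_pos h]
    field_simp
    ring
  · simp only [if_neg h]
    field_simp
    ring
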